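/- Suppose each f_i : ℝ^d → ℝ is μ-strongly convex and L-smooth (μ ≤ L), for i = 1,…,n. Let x₁,…,x_n ∈ ℝ^d, x̄ = (1/n)∑_i x_i, d̄ = (1/n)∑_i ∇f_i(x_i), f = (1/n)∑_i f_i, and let x* be the minimizer of f. Then f(x̄) ≤ f(x*) + ⟨d̄, x̄ − x*⟩ − (μ/4)‖x̄ − x*‖² + (L/n)∑_{i=1}^n ‖x_i − x̄‖². -/

import Mathlib

/-- For μ-strongly convex, L-smooth f_i (μ ≤ L), with x̄, d̄, f as usual and
x* the minimizer of f:
f(x̄) ≤ f(x*) + ⟨d̄, x̄ − x*⟩ − (μ/4)‖x̄ − x*‖² + (L/n)∑‖x_i − x̄‖². -/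
theorem stmt7 {d n : ℕ} (hn : 0 < n) (μ L : ℝ) (hμ : 0 < μ) (hμL : μ ≤ L)
    (fs : Fin n → EuclideanSpace ℝ (Fin d) → ℝ)
    (hdiff : ∀ i, Differentiable ℝ (fs i))
    (hsc : ∀ i x y, fs i y + (inner ℝ (gradient (fs i) y) (x - y) : ℝ)
        + μ / 2 * ‖x - y‖ ^ 2 ≤ fs i x)
    (hsmooth : ∀ i x y, fs i x ≤
      fs i y + (inner ℝ (gradient (fs i) y) (x - y) : ℝ) + L / 2 * ‖x - y‖ ^ 2)
    (x : Fin n → EuclideanSpace ℝ (Fin d)) (xstar : EuclideanSpace ℝ (Fin d))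
    (hmin : ∀ y, (1 / (n : ℝ)) * ∑ i, fs i xstar ≤ (1 / (n : ℝ)) * ∑ i, fs i y) :
    (1 / (n : ℝ)) * ∑ i, fs i ((1 / (n : ℝ)) • ∑ j, x j) ≤
      (1 / (n : ℝ)) * ∑ i, fs i xstar
        + (inner ℝ ((1 / (n : ℝ)) • ∑ i, gradient (fs i) (x i))
            ((1 / (n : ℝ)) • (∑ j, x j) - xstar) : ℝ)
        - μ / 4 * ‖(1 / (n : ℝ)) • (∑ j, x j) - xstar‖ ^ 2
        + L / (n : ℝ) * ∑ i, ‖x i - (1 / (n : ℝ)) • (∑ j, x j)‖ ^ 2 := by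
  set xb : EuclideanSpace ℝ (Fin d) := (1 / (n : ℝ)) • ∑ j, x j with hxb
  have hn0 : (n : ℝ) ≠ 0 := Nat.cast_ne_zero.mpr hn.ne'
  have hninv : (0:ℝ) ≤ 1 / (n : ℝ) := by positivity
  have key : ∀ i, fs i xb ≤ fs i xstar
      + (inner ℝ (gradient (fs i) (x i)) (xb - xstar) : ℝ)
      - μ / 4 * ‖xb - xstar‖ ^ 2 + L * ‖x i - xb‖ ^ 2 := by
    intro i
    have h1 := hsmooth i xb (x i)
    have h2 := hsc i xstar (x i)
    have hinner : (inner ℝ (gradient (fs i) (x i)) (xb - x i) : ℝ)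
        = (inner ℝ (gradient (fs i) (x i)) (xb - xstar) : ℝ)
          + (inner ℝ (gradient (fs i) (x i)) (xstar - x i) : ℝ) := by
      rw [← inner_add_right]; congr 1; abel
    have htri : ‖xb - xstar‖ ≤ ‖xb - x i‖ + ‖x i - xstar‖ :=
      norm_sub_le_norm_sub_add_norm_sub _ _ _
    have h3 : ‖xstar - x i‖ = ‖x i - xstar‖ := norm_sub_rev _ _
    have h4 : ‖xb - x i‖ = ‖x i - xb‖ := norm_sub_rev _ _
    have hnn1 : (0:ℝ) ≤ ‖xb - x i‖ := norm_nonneg _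
    have hnn2 : (0:ℝ) ≤ ‖x i - xstar‖ := norm_nonneg _
    have hnn3 : (0:ℝ) ≤ ‖xb - xstar‖ := norm_nonneg _
    rw [h4] at h1
    rw [h3] at h2
    have hc2 : ‖xb - xstar‖ ^ 2 ≤ 2 * ‖x i - xb‖ ^ 2 + 2 * ‖x i - xstar‖ ^ 2 := by
      nlinarith [sq_nonneg (‖xb - x i‖ - ‖x i - xstar‖),
        mul_self_le_mul_self hnn3 htri]
    have hmul1 := mul_le_mul_of_nonneg_left hc2 (le_of_lt (by positivity : (0:ℝ) < μ / 4))
    have hmul2 := mul_le_mul_of_nonneg_right hμL (sq_nonneg ‖x i - xb‖)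
    nlinarith [hmul1, hmul2]
  have hsum : ∑ i, fs i xb ≤ ∑ i, (fs i xstar
      + (inner ℝ (gradient (fs i) (x i)) (xb - xstar) : ℝ)
      - μ / 4 * ‖xb - xstar‖ ^ 2 + L * ‖x i - xb‖ ^ 2) :=
    Finset.sum_le_sum (fun i _ => key i)
  have expand : (inner ℝ ((1 / (n : ℝ)) • ∑ i, gradient (fs i) (x i)) (xb - xstar) : ℝ)
      = (1 / (n : ℝ)) * ∑ i, (inner ℝ (gradient (fs i) (x i)) (xb - xstar) : ℝ) := by
    rw [real_inner_smul_left, sum_inner]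
  have hsplit : ∑ i, (fs i xstar + (inner ℝ (gradient (fs i) (x i)) (xb - xstar) : ℝ)
      - μ / 4 * ‖xb - xstar‖ ^ 2 + L * ‖x i - xb‖ ^ 2)
      = ∑ i, fs i xstar + ∑ i, (inner ℝ (gradient (fs i) (x i)) (xb - xstar) : ℝ)
      - (n : ℝ) * (μ / 4 * ‖xb - xstar‖ ^ 2) + L * ∑ i, ‖x i - xb‖ ^ 2 := by
    rw [Finset.sum_add_distrib, Finset.sum_sub_distrib, Finset.sum_add_distrib,
      Finset.sum_const, ← Finset.mul_sum]
    simp [nsmul_eq_mul]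
  calc (1 / (n : ℝ)) * ∑ i, fs i xb
      ≤ (1 / (n : ℝ)) * ∑ i, (fs i xstar + (inner ℝ (gradient (fs i) (x i)) (xb - xstar) : ℝ)
          - μ / 4 * ‖xb - xstar‖ ^ 2 + L * ‖x i - xb‖ ^ 2) :=
        mul_le_mul_of_nonneg_left hsum hninv
    _ = (1 / (n : ℝ)) * ∑ i, fs i xstar
        + (inner ℝ ((1 / (n : ℝ)) • ∑ i, gradient (fs i) (x i)) (xb - xstar) : ℝ)
        - μ / 4 * ‖xb - xstar‖ ^ 2 + L / (n : ℝ) * ∑ i, ‖x i - xb‖ ^ 2 := by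
        rw [hsplit, expand]; field_simp
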